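/- arXiv:math/0002165 — 5 statements merged into one kernel-verified Lean document; each statement's English description precedes it below -/
import Mathlib

section
/- For partial bijections gamma, gamma' of {1,...,n}, let deg(gamma) be the number of indices i with gamma not defined at i or gamma(i) ≠ i. Then deg(gamma * gamma') ≤ deg(gamma) + deg(gamma'). Moreover, if equality holds then gamma and gamma' commute. -/
open scoped BigOperators

/-- A partial bijection of `α`: a partially defined injective map,
encoded as an `Option`-valued function that is injective on its domain. -/
def PartialBij (α : Type*) : Type _ :=
  {f : α → Option α // ∀ x y z : α, f x = some z → f y = some z → x = y}

namespace PartialBij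

variable {α : Type*}

/-- Composition: `(g.comp f) x = g (f x)` (product of relations). -/
def comp (g f : PartialBij α) : PartialBij α :=
  ⟨fun x => (f.1 x).bind g.1, by
    intro x y z hx hy
    rcases Option.bind_eq_some_iff.mp hx with ⟨a, ha, ha'⟩
    rcases Option.bind_eq_some_iff.mp hy with ⟨b, hb, hb'⟩
    have hab : a = b := g.2 _ _ _ ha' hb'
    subst hab
    exact f.2 _ _ _ ha hb⟩

instance : Monoid (PartialBij α) where
  mul := comp
  one := ⟨fun x => some x, fun x y z hx hy =>
    (Option.some_inj.mp hx).trans (Option.some_inj.mp hy).symm⟩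
  mul_assoc a b c := Subtype.ext <| funext fun x => (Option.bind_assoc _ _ _).symm
  one_mul a := Subtype.ext <| funext fun x => by
    show (a.1 x).bind some = a.1 x
    cases a.1 x <;> rfl
  mul_one a := Subtype.ext <| funext fun x => rfl

theorem mul_def (g f : PartialBij α) (x : α) : (g * f).1 x = (f.1 x).bind g.1 := rfl

theorem one_def (x : α) : (1 : PartialBij α).1 x = some x := rfl

/-- The domain of a partial bijection. -/
def dom (f : PartialBij α) : Set α := {x | f.1 x ≠ none}

/-- The range of a partial bijection. -/
def ran (f : PartialBij α) : Set α := {y | ∃ x, f.1 x = some y}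

open Classical in
/-- The inverse partial bijection `γ*`. -/
noncomputable def inv (f : PartialBij α) : PartialBij α :=
  ⟨fun y => if h : ∃ x, f.1 x = some y then some h.choose else none, by
    intro a b z ha hb
    dsimp only at ha hb
    by_cases h1 : ∃ x, f.1 x = some a
    · by_cases h2 : ∃ x, f.1 x = some b
      · rw [dif_pos h1] at ha
        rw [dif_pos h2] at hb
        have ha' := h1.choose_spec
        have hb' := h2.choose_spec
        rw [Option.some_inj.mp ha] at ha'
        rw [Option.some_inj.mp hb] at hb'
        exact Option.some_inj.mp (ha'.symm.trans hb')
      · rw [dif_neg h2] at hb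
        exact absurd hb (by simp)
    · rw [dif_neg h1] at ha
      exact absurd ha (by simp)⟩

open Classical in
/-- The identity bijection `1_Y` of a subset `Y ⊆ α`. -/
noncomputable def idOn (Y : Set α) : PartialBij α :=
  ⟨fun x => if x ∈ Y then some x else none, by
    intro x y z hx hy
    dsimp only at hx hy
    split_ifs at hx hy
    exact (Option.some_inj.mp hx).trans (Option.some_inj.mp hy).symm⟩

/-- A permutation regarded as a (total) partial bijection. -/
def ofPerm (s : Equiv.Perm α) : PartialBij α :=
  ⟨fun x => some (s x), fun x y z hx hy =>
    s.injective ((Option.some_inj.mp hx).trans (Option.some_inj.mp hy).symm)⟩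

/-- The idempotent `ε_k`: the identity bijection of `α \ {k}`. -/
def eps [DecidableEq α] (k : α) : PartialBij α :=
  ⟨fun x => if x = k then none else some x, by
    intro x y z hx hy
    dsimp only at hx hy
    split_ifs at hx hy
    exact (Option.some_inj.mp hx).trans (Option.some_inj.mp hy).symm⟩

/-- `deg γ`: the number of points which are not fixed points of `γ`. -/
def deg {n : ℕ} (f : PartialBij (Fin n)) : ℕ :=
  (Finset.univ.filter fun i : Fin n => f.1 i ≠ some i).card

/-- `deg_m γ`: the number of points in `{m+1,…,n}` (0-indexed: indices `≥ m`)
which are not fixed points of `γ`. -/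
def degm {n : ℕ} (m : ℕ) (f : PartialBij (Fin n)) : ℕ :=
  (Finset.univ.filter fun i : Fin n => m ≤ i.val ∧ f.1 i ≠ some i).card

/-- The rank of a partial bijection: the cardinality of its domain. -/
def rank {n : ℕ} (f : PartialBij (Fin n)) : ℕ :=
  (Finset.univ.filter fun i : Fin n => f.1 i ≠ none).card

end PartialBij

private lemma commute_of_disjoint {n : ℕ} (γ γ' : PartialBij (Fin n))
    (h : ∀ x, γ.1 x = some x ∨ γ'.1 x = some x) : γ * γ' = γ' * γ := by
  have key : ∀ (f g : PartialBij (Fin n)),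
      (∀ x, f.1 x = some x ∨ g.1 x = some x) →
      ∀ x, f.1 x = some x → (g.1 x).bind f.1 = g.1 x := by
    intro f g hfg x hx
    cases hy : g.1 x with
    | none => rfl
    | some y =>
      rw [Option.bind_some]
      rcases hfg y with hy' | hy'
      · rw [hy']
      · have hxy : x = y := g.2 x y y hy hy'
        rw [← hxy, hx, hxy]
  apply Subtype.ext
  funext x
  show (γ'.1 x).bind γ.1 = (γ.1 x).bind γ'.1
  rcases h x with hx | hx
  · rw [hx, Option.bind_some, key γ γ' h x hx]
  · rw [hx, Option.bind_some, key γ' γ (fun z => (h z).symm) x hx]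

/-- `deg (γγ') ≤ deg γ + deg γ'`, and equality implies that `γ` and `γ'`
commute. -/
theorem deg_mul_le {n : ℕ} (γ γ' : PartialBij (Fin n)) :
    PartialBij.deg (γ * γ') ≤ PartialBij.deg γ + PartialBij.deg γ' ∧
    (PartialBij.deg (γ * γ') = PartialBij.deg γ + PartialBij.deg γ' →
      γ * γ' = γ' * γ) := by
  classical
  set A := Finset.univ.filter fun i : Fin n => γ.1 i ≠ some i with hA
  set B := Finset.univ.filter fun i : Fin n => γ'.1 i ≠ some i with hB
  set C := Finset.univ.filter fun i : Fin n => (γ * γ').1 i ≠ some i with hC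
  have hsub : C ⊆ A ∪ B := by
    intro i hi
    simp only [hA, hB, hC, Finset.mem_filter, Finset.mem_union, Finset.mem_univ, true_and] at *
    by_contra hcon
    push_neg at hcon
    apply hi
    rw [PartialBij.mul_def, hcon.2, Option.bind_some, hcon.1]
  have h1 : C.card ≤ (A ∪ B).card := Finset.card_le_card hsub
  have h2 : (A ∪ B).card ≤ A.card + B.card := Finset.card_union_le A B
  refine ⟨le_trans h1 h2, fun heq => ?_⟩
  have hdisj : Disjoint A B := by
    have : (A ∪ B).card = A.card + B.card := le_antisymm h2 (heq ▸ h1)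
    exact (Finset.card_union_eq_card_add_card).mp this
  apply commute_of_disjoint
  intro x
  by_contra hcon
  push_neg at hcon
  have hxA : x ∈ A := by simp [hA, hcon.1]
  have hxB : x ∈ B := by simp [hB, hcon.2]
  exact (Finset.disjoint_left.mp hdisj hxA) hxB
end

section
/- Fix m ≤ n. The map sending sigma to the partial bijection obtained from sigma by removing from its graph all fixed points lying in {m+1,...,n} is a bijection from Gamma(m,n) := {sigma ∈ Gamma(n) : {m+1,...,n} ⊆ dom(sigma) and {m+1,...,n} ⊆ range(sigma)} onto the set of partial bijections gamma of {1,...,n} with dom(gamma) ∩ {m+1,...,n} = range(gamma) ∩ {m+1,...,n} and with no fixed points in {m+1,...,n}. -/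
open scoped BigOperators

/-- `Γ(m,n)`: partial bijections of `{1,…,n}` whose domain and range both
contain `{m+1,…,n}` (0-indexed: all indices `≥ m`). -/
def GammaBand (m n : ℕ) : Set (PartialBij (Fin n)) :=
  {σ | ∀ i : Fin n, m ≤ i.val → (i ∈ PartialBij.dom σ ∧ i ∈ PartialBij.ran σ)}

/-- Removing from `σ` all fixed points lying in `{m+1,…,n}`. -/
def stripBand {n : ℕ} (m : ℕ) (σ : PartialBij (Fin n)) : PartialBij (Fin n) :=
  ⟨fun i => (σ.1 i).bind fun j => if j = i ∧ m ≤ i.val then none else some j, by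
    intro x y z hx hy
    dsimp only at hx hy
    rcases Option.bind_eq_some_iff.mp hx with ⟨a, ha, ha'⟩
    rcases Option.bind_eq_some_iff.mp hy with ⟨b, hb, hb'⟩
    split_ifs at ha' hb'
    rw [Option.some_inj.mp ha'] at ha
    rw [Option.some_inj.mp hb'] at hb
    exact σ.2 _ _ _ ha hb⟩

private theorem strip_recover {n m : ℕ} (σ : PartialBij (Fin n)) (hσ : σ ∈ GammaBand m n)
    (i : Fin n) :
    σ.1 i = ((stripBand m σ).1 i).elim (if m ≤ i.val then some i else none) some := by
  rcases h : σ.1 i with _ | j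
  · have hmi : ¬ m ≤ i.val := fun hmi => (hσ i hmi).1 h
    simp [stripBand, h, hmi]
  · by_cases hji : j = i ∧ m ≤ i.val
    · simp [stripBand, h, hji, hji.1, hji.2]
    · simp [stripBand, h, hji]

/-- The map removing fixed points in `{m+1,…,n}` is a bijection from `Γ(m,n)`
onto the set of partial bijections `γ` with
`dom γ ∩ {m+1,…,n} = range γ ∩ {m+1,…,n}` and no fixed points in
`{m+1,…,n}`. -/
theorem stripBand_bijection (n m : ℕ) (hm : m ≤ n) :
    Set.InjOn (stripBand m) (GammaBand m n) ∧
    stripBand m '' GammaBand m n =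
      {γ : PartialBij (Fin n) |
        PartialBij.dom γ ∩ {i : Fin n | m ≤ i.val} =
          PartialBij.ran γ ∩ {i : Fin n | m ≤ i.val} ∧
        ∀ i : Fin n, m ≤ i.val → γ.1 i ≠ some i} := by
  constructor
  · intro σ hσ τ hτ hστ
    apply Subtype.ext
    funext i
    rw [strip_recover σ hσ i, strip_recover τ hτ i, hστ]
  · apply Set.Subset.antisymm
    · rintro _ ⟨σ, hσ, rfl⟩
      constructor
      · ext i
        simp only [Set.mem_inter_iff, Set.mem_setOf_eq, PartialBij.dom, PartialBij.ran]
        constructor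
        · rintro ⟨hdom, hmi⟩
          refine ⟨?_, hmi⟩
          -- i ∈ ran (strip σ)
          obtain ⟨x, hx⟩ := (hσ i hmi).2
          -- show σ i ≠ some i (else strip σ i = none)
          have hσi : σ.1 i ≠ some i := by
            intro heq
            apply hdom
            simp [stripBand, heq, hmi]
          have hxi : x ≠ i := by
            rintro rfl; exact hσi hx
          refine ⟨x, ?_⟩
          have : ¬ (i = x ∧ m ≤ x.val) := by
            rintro ⟨rfl, _⟩; exact hxi rfl
          simp [stripBand, hx, this]
        · rintro ⟨⟨x, hx⟩, hmi⟩
          refine ⟨?_, hmi⟩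
          -- from hx : strip σ x = some i, get σ x = some i with ¬(i = x ∧ m ≤ x)
          simp only [stripBand] at hx
          rcases Option.bind_eq_some_iff.mp hx with ⟨j, hj, hj'⟩
          split_ifs at hj' with hcond
          obtain rfl : i = j := (Option.some_inj.mp hj').symm
          -- σ x = some i; need strip σ i ≠ none, i.e. σ i = some k, k ≠ i
          have hdom := (hσ i hmi).1
          rcases h : σ.1 i with _ | k
          · exact absurd h hdom
          · have hki : k ≠ i := by
              rintro rfl
              have : x = k := σ.2 _ _ _ hj h
              subst this
              exact hcond ⟨rfl, hmi⟩
            intro hnone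
            simp only [stripBand, h, Option.bind_some] at hnone
            split_ifs at hnone with h2
            exact hki h2.1
      · intro i hmi heq
        simp only [stripBand] at heq
        rcases Option.bind_eq_some_iff.mp heq with ⟨j, hj, hj'⟩
        split_ifs at hj' with hcond
        obtain rfl : i = j := (Option.some_inj.mp hj').symm
        exact hcond ⟨rfl, hmi⟩
    · rintro γ ⟨hdr, hnf⟩
      classical
      -- construct σ: σ i = γ i if defined, else some i if m ≤ i, else none
      refine ⟨⟨fun i => (γ.1 i).elim (if m ≤ i.val then some i else none) some, ?_⟩, ?_, ?_⟩
      · intro x y z hx hy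
        dsimp only at hx hy
        have key : ∀ a : Fin n, (γ.1 a).elim (if m ≤ a.val then some a else none) some = some z →
            γ.1 a = some z ∨ (γ.1 a = none ∧ m ≤ a.val ∧ a = z) := by
          intro a ha
          rcases h : γ.1 a with _ | j
          · rw [h] at ha
            simp only [Option.elim] at ha
            split_ifs at ha with hma
            exact Or.inr ⟨rfl, hma, Option.some_inj.mp ha⟩
          · rw [h] at ha
            simp only [Option.elim] at ha
            exact Or.inl ha
        have hz_notran : ∀ a : Fin n, γ.1 a = none → m ≤ a.val → a ∉ PartialBij.ran γ := by
          intro a hnone hma hran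
          have : a ∈ PartialBij.dom γ ∩ {i : Fin n | m ≤ i.val} := by
            rw [hdr]; exact ⟨hran, hma⟩
          exact this.1 hnone
        rcases key x hx with hgx | ⟨hnx, hmx, rfl⟩
        · rcases key y hy with hgy | ⟨hny, hmy, rfl⟩
          · exact γ.2 _ _ _ hgx hgy
          · exact absurd ⟨x, hgx⟩ (hz_notran y hny hmy)
        · rcases key y hy with hgy | ⟨hny, hmy, h2⟩
          · exact absurd ⟨y, hgy⟩ (hz_notran x hnx hmx)
          · exact h2.symm
      · -- membership in GammaBand
        intro i hmi
        constructor
        · show ¬ _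
          rcases h : γ.1 i with _ | j <;> simp [h, hmi]
        · by_cases hi : i ∈ PartialBij.ran γ
          · obtain ⟨x, hx⟩ := hi
            exact ⟨x, by simp [hx]⟩
          · have hnone : γ.1 i = none := by
              by_contra hne
              have : i ∈ PartialBij.ran γ ∩ {j : Fin n | m ≤ j.val} := by
                rw [← hdr]; exact ⟨hne, hmi⟩
              exact hi this.1
            exact ⟨i, by simp [hnone, hmi]⟩
      · -- stripBand m σ = γ
        apply Subtype.ext
        funext i
        rcases h : γ.1 i with _ | j
        · by_cases hmi : m ≤ i.val
          · simp [stripBand, h, hmi]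
          · simp [stripBand, h, hmi]
        · have hji : ¬ (j = i ∧ m ≤ i.val) := by
            intro hc
            rw [hc.1] at h
            exact hnf i hc.2 h
          simp [stripBand, h, hji]
end

section
/- Let A(n) = C[Gamma(n)] and let A_{n-1}(n) be the centralizer in A(n) of the subsemigroup Gamma_{n-1}(n) of partial bijections fixing each of 1,...,n-1 (i.e. whose matrices have first n-1 diagonal entries equal to 1). Then the linear map theta_n : A(n) → A(n-1) induced by striking the last row and column of matrices restricts to a unital algebra homomorphism A_{n-1}(n) → A(n-1), given on this centralizer by a ↦ eps_n * a * eps_n. -/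
open scoped BigOperators

namespace PartialBij

/-- The upper-left `n × n` corner of a partial bijection of `{1,…,n+1}`. -/
def corner {n : ℕ} (γ : PartialBij (Fin (n + 1))) : PartialBij (Fin n) :=
  ⟨fun i => (γ.1 i.castSucc).bind fun j => if h : j.val < n then some ⟨j.val, h⟩ else none, by
    intro x y z hx hy
    dsimp only at hx hy
    rcases Option.bind_eq_some_iff.mp hx with ⟨a, ha, ha'⟩
    rcases Option.bind_eq_some_iff.mp hy with ⟨b, hb, hb'⟩
    have haz : a = z.castSucc := by
      by_cases h : a.val < n
      · rw [dif_pos h] at ha'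
        have := Option.some_inj.mp ha'
        apply Fin.ext
        rw [← this]
        simp
      · rw [dif_neg h] at ha'
        exact absurd ha' (by simp)
    have hbz : b = z.castSucc := by
      by_cases h : b.val < n
      · rw [dif_pos h] at hb'
        have := Option.some_inj.mp hb'
        apply Fin.ext
        rw [← this]
        simp
      · rw [dif_neg h] at hb'
        exact absurd hb' (by simp)
    subst haz
    rw [hbz] at hb
    exact Fin.castSucc_injective n (γ.2 _ _ _ ha hb)⟩

/-- The `0`-embedding `ψ : Γ(n) → Γ(n+1)` (extension by zero). -/
def extend0 {n : ℕ} (γ : PartialBij (Fin n)) : PartialBij (Fin (n + 1)) :=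
  ⟨fun i => if h : i.val < n then (γ.1 ⟨i.val, h⟩).map Fin.castSucc else none, by
    intro x y z hx hy
    dsimp only at hx hy
    by_cases h1 : x.val < n
    · by_cases h2 : y.val < n
      · rw [dif_pos h1] at hx
        rw [dif_pos h2] at hy
        rcases Option.map_eq_some_iff.mp hx with ⟨a, ha, ha'⟩
        rcases Option.map_eq_some_iff.mp hy with ⟨b, hb, hb'⟩
        have hab : a = b := Fin.castSucc_injective n (ha'.trans hb'.symm)
        subst hab
        have := γ.2 _ _ _ ha hb
        exact Fin.ext (by simpa using congrArg Fin.val this)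
      · rw [dif_neg h2] at hy
        exact absurd hy (by simp)
    · rw [dif_neg h1] at hx
      exact absurd hx (by simp)⟩

/-- `θ_{n+1} : C[Γ(n+1)] → C[Γ(n)]`, the linear map striking the last
row and column of the monomial matrices. -/
noncomputable def theta (n : ℕ) (a : MonoidAlgebra ℂ (PartialBij (Fin (n + 1)))) :
    MonoidAlgebra ℂ (PartialBij (Fin n)) :=
  MonoidAlgebra.mapDomain corner a

/-- The image of `Γ_m(n)` (partial bijections fixing each of the first `m` points)
inside the semigroup algebra `C[Γ(n)]`. -/
def Gset (m n : ℕ) : Set (MonoidAlgebra ℂ (PartialBij (Fin n))) :=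
  {x | ∃ γ : PartialBij (Fin n), (∀ i : Fin n, i.val < m → γ.1 i = some i) ∧
    x = MonoidAlgebra.single γ 1}

end PartialBij

/-- Concatenation of compositions (the partition `M ∪ L`). -/
def Composition.app {a b : ℕ} (c₁ : Composition a) (c₂ : Composition b) :
    Composition (a + b) :=
  ⟨c₁.blocks ++ c₂.blocks,
   fun {i} hi => (List.mem_append.mp hi).elim (fun h => c₁.blocks_pos h)
     (fun h => c₂.blocks_pos h),
   by rw [List.sum_append, c₁.blocks_sum, c₂.blocks_sum]⟩

/-- `c_n^{M}` for a partition (composition) `M = (M_1,…,M_r)`: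
the sum over all sequences of `|M|` pairwise distinct indices of the
product of the disjoint cycles of lengths `M_1,…,M_r`. -/
noncomputable def cElt (n : ℕ) {N : ℕ} (c : Composition N) :
    MonoidAlgebra ℂ (Equiv.Perm (Fin n)) :=
  ∑ w : Fin N ↪ Fin n,
    MonoidAlgebra.single ((((List.ofFn ⇑w).splitWrtComposition c).map List.formPerm).prod) 1

/-- `c_n^{M}` for a partition `M` of `n`. -/
noncomputable def cPart (n : ℕ) (p : Nat.Partition n) :
    MonoidAlgebra ℂ (Equiv.Perm (Fin n)) :=
  cElt n ⟨p.parts.toList,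
    fun {i} hi => p.parts_pos (Multiset.mem_toList.mp hi),
    by rw [Multiset.sum_toList]⟩

/-- `Δ_n^{M}` in `C[Γ(n)]`. -/
noncomputable def Delta (n : ℕ) {N : ℕ} (c : Composition N) :
    MonoidAlgebra ℂ (PartialBij (Fin n)) :=
  ∑ w : Fin N ↪ Fin n,
    MonoidAlgebra.single
      (PartialBij.ofPerm ((((List.ofFn ⇑w).splitWrtComposition c).map List.formPerm).prod)) 1
    * (List.ofFn fun a : Fin N =>
        (1 - MonoidAlgebra.single (PartialBij.eps (w a)) (1 : ℂ))).prod

namespace PartialBij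

variable {n : ℕ}

theorem mul_val {α : Type*} (g f : PartialBij α) :
    (g * f).1 = fun x => (f.1 x).bind g.1 := rfl

theorem one_val {α : Type*} : (1 : PartialBij α).1 = fun x => some x := rfl

theorem corner_val (γ : PartialBij (Fin (n + 1))) :
    (corner γ).1 = fun i =>
      (γ.1 i.castSucc).bind fun j => if h : j.val < n then some ⟨j.val, h⟩ else none := rfl

theorem extend0_val (γ : PartialBij (Fin n)) :
    (extend0 γ).1 = fun i =>
      if h : i.val < n then (γ.1 ⟨i.val, h⟩).map Fin.castSucc else none := rfl

theorem eps_val (k : Fin (n + 1)) :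
    (eps k).1 = fun x => if x = k then none else some x := rfl

theorem corner_one : corner (1 : PartialBij (Fin (n + 1))) = 1 := by
  refine Subtype.ext (funext fun i => ?_)
  simp only [corner_val, one_val, Option.bind_some, Fin.coe_castSucc, i.isLt, dif_pos]

theorem corner_extend0 (γ : PartialBij (Fin n)) : corner (extend0 γ) = γ := by
  refine Subtype.ext (funext fun i => ?_)
  simp only [corner_val, extend0_val, Fin.coe_castSucc, i.isLt, dif_pos, Fin.eta]
  cases hgi : γ.1 i with
  | none => rfl
  | some j =>
    simp only [Option.map_some, Option.bind_some, Fin.coe_castSucc, j.isLt, dif_pos, Fin.eta]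

theorem extend0_injective : Function.Injective (extend0 (n := n)) := by
  intro a b h
  rw [← corner_extend0 a, ← corner_extend0 b, h]

theorem extend0_mul (γ δ : PartialBij (Fin n)) :
    extend0 (γ * δ) = extend0 γ * extend0 δ := by
  refine Subtype.ext (funext fun x => ?_)
  simp only [mul_val, extend0_val]
  by_cases h : x.val < n
  · simp only [dif_pos h]
    cases hd : δ.1 ⟨x.val, h⟩ with
    | none => rfl
    | some j =>
      simp only [Option.bind_some, Option.map_some, Fin.coe_castSucc, j.isLt, dif_pos,
        Fin.eta, Option.map_bind]
  · simp only [dif_neg h, Option.bind_none]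

/-- `extend0` as a multiplicative homomorphism. -/
def extend0MulHom : PartialBij (Fin n) →ₙ* PartialBij (Fin (n + 1)) :=
  ⟨extend0, extend0_mul⟩

theorem eps_last_val (x : Fin (n + 1)) :
    (eps (Fin.last n)).1 x = if x.val < n then some x else none := by
  simp only [eps_val]
  rcases Fin.eq_castSucc_or_eq_last x with ⟨y, rfl⟩ | rfl
  · rw [if_neg (Fin.castSucc_lt_last y).ne,
      if_pos (show (y.castSucc : Fin (n+1)).val < n from y.isLt)]
  · rw [if_pos rfl, if_neg (show ¬(Fin.last n).val < n by simp)]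

theorem eps_mul_eps : eps (Fin.last n) * eps (Fin.last n) = eps (Fin.last n) := by
  refine Subtype.ext (funext fun x => ?_)
  rw [mul_val]
  dsimp only
  rw [eps_last_val]
  by_cases h : x.val < n
  · rw [if_pos h, Option.bind_some, eps_last_val, if_pos h]
  · rw [if_neg h, Option.bind_none]

theorem eps_conj (γ : PartialBij (Fin (n + 1))) :
    eps (Fin.last n) * γ * eps (Fin.last n) = extend0 (corner γ) := by
  refine Subtype.ext (funext fun x => ?_)
  simp only [mul_val, extend0_val, corner_val]
  rw [eps_last_val]
  by_cases h : x.val < n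
  · rw [if_pos h, dif_pos h, Option.bind_some]
    have hc : (⟨x.val, h⟩ : Fin n).castSucc = x := Fin.ext rfl
    rw [hc]
    cases hg : γ.1 x with
    | none => rfl
    | some j =>
      rw [Option.bind_some, Option.bind_some, eps_last_val]
      by_cases hj : j.val < n
      · rw [if_pos hj, dif_pos hj, Option.map_some]
        exact congrArg some (Fin.ext rfl).symm
      · rw [if_neg hj, dif_neg hj, Option.map_none]
  · rw [if_neg h, dif_neg h, Option.bind_none]

theorem eps_mem_Gset :
    (MonoidAlgebra.single (eps (Fin.last n)) 1 : MonoidAlgebra ℂ (PartialBij (Fin (n+1)))) ∈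
      Gset n (n + 1) := by
  refine ⟨eps (Fin.last n), fun i hi => ?_, rfl⟩
  rw [eps_last_val, if_pos hi]

end PartialBij

namespace PartialBij

variable {n : ℕ}

theorem mapDomain_extend0_mul (x y : MonoidAlgebra ℂ (PartialBij (Fin n))) :
    MonoidAlgebra.mapDomain (extend0 (n := n)) (x * y) =
      @HMul.hMul (MonoidAlgebra ℂ (PartialBij (Fin (n + 1)))) _ _ instHMul
        (MonoidAlgebra.mapDomain (extend0 (n := n)) x)
        (MonoidAlgebra.mapDomain (extend0 (n := n)) y) :=
  MonoidAlgebra.mapDomain_mul (extend0MulHom (n := n)) x y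

theorem psi_theta (a : MonoidAlgebra ℂ (PartialBij (Fin (n + 1)))) :
    MonoidAlgebra.mapDomain (extend0 (n := n)) (theta n a) =
      MonoidAlgebra.single (eps (Fin.last n)) 1 * a *
        MonoidAlgebra.single (eps (Fin.last n)) 1 := by
  unfold theta
  induction a using MonoidAlgebra.induction_linear with
  | zero => simp
  | add f g hf hg =>
    rw [MonoidAlgebra.mapDomain_add, MonoidAlgebra.mapDomain_add, hf, hg, mul_add, add_mul]
  | single γ c =>
    rw [MonoidAlgebra.mapDomain_single, MonoidAlgebra.mapDomain_single, ← eps_conj]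
    show MonoidAlgebra.single _ c = _
    rw [MonoidAlgebra.single_mul_single, MonoidAlgebra.single_mul_single, one_mul, mul_one]

theorem single_eps_idem :
    (MonoidAlgebra.single (eps (Fin.last n)) 1 : MonoidAlgebra ℂ (PartialBij (Fin (n+1)))) *
      MonoidAlgebra.single (eps (Fin.last n)) 1 =
      MonoidAlgebra.single (eps (Fin.last n)) 1 := by
  rw [MonoidAlgebra.single_mul_single, one_mul, eps_mul_eps]

end PartialBij

open PartialBij in
/-- The map `θ_{n+1}` restricts to a unital algebra homomorphism from the
centralizer `A_n(n+1)` of `Γ_n(n+1)` in `A(n+1)` to `A(n)`, and on this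
centralizer it is given by `a ↦ ε_{n+1} a ε_{n+1}` (under the `0`-embedding
identification of `A(n)` with a subspace of `A(n+1)`). -/
theorem theta_algebra_hom (n : ℕ) :
    PartialBij.theta n 1 = 1 ∧
    (∀ a b : MonoidAlgebra ℂ (PartialBij (Fin (n + 1))),
      a ∈ Subalgebra.centralizer ℂ (PartialBij.Gset n (n + 1)) →
      b ∈ Subalgebra.centralizer ℂ (PartialBij.Gset n (n + 1)) →
      PartialBij.theta n (a * b) = PartialBij.theta n a * PartialBij.theta n b) ∧
    (∀ a ∈ Subalgebra.centralizer ℂ (PartialBij.Gset n (n + 1)),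
      MonoidAlgebra.mapDomain (PartialBij.extend0 (n := n)) (PartialBij.theta n a) =
        MonoidAlgebra.single (PartialBij.eps (Fin.last n)) 1 * a *
          MonoidAlgebra.single (PartialBij.eps (Fin.last n)) 1) := by
  set E : MonoidAlgebra ℂ (PartialBij (Fin (n + 1))) :=
    MonoidAlgebra.single (eps (Fin.last n)) 1 with hE
  have hEE : E * E = E := single_eps_idem
  refine ⟨?_, ?_, ?_⟩
  · unfold PartialBij.theta
    rw [MonoidAlgebra.one_def, MonoidAlgebra.mapDomain_single, corner_one]
    exact MonoidAlgebra.one_def.symm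
  · intro a b ha hb
    have ha' : E * a = a * E := (Subalgebra.mem_centralizer_iff ℂ).mp ha _ eps_mem_Gset
    have hb' : E * b = b * E := (Subalgebra.mem_centralizer_iff ℂ).mp hb _ eps_mem_Gset
    apply MonoidAlgebra.mapDomain_injective (extend0_injective (n := n))
    calc MonoidAlgebra.mapDomain (extend0 (n := n)) (theta n (a * b))
        = E * (a * b) * E := psi_theta _
      _ = (E * a * E) * (E * b * E) := by
          have h1 : E * a * E = E * a := by rw [mul_assoc, ← ha', ← mul_assoc, hEE]
          have h2 : E * b * E = b * E := by rw [hb', mul_assoc, hEE]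
          rw [h1, h2]
          simp only [mul_assoc]
      _ = MonoidAlgebra.mapDomain (extend0 (n := n)) (theta n a * theta n b) := by
          rw [mapDomain_extend0_mul, psi_theta, psi_theta]
  · intro a _
    exact psi_theta a
end

section
/- With notation as in the centralizer construction, for 0 ≤ m ≤ n-1 the homomorphism theta_n : A_{n-1}(n) → A(n-1) maps the centralizer A_m(n) of Gamma_m(n) in A(n) into the centralizer A_m(n-1) of Gamma_m(n-1) in A(n-1). -/
open scoped BigOperators

namespace PartialBij

/-- Extension of a partial bijection of `Fin n` to `Fin (n+1)` fixing the last point. -/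
def extend1 {n : ℕ} (γ : PartialBij (Fin n)) : PartialBij (Fin (n + 1)) :=
  ⟨fun i => if h : i.val < n then (γ.1 ⟨i.val, h⟩).map Fin.castSucc else some i, by
    intro x y z hx hy
    dsimp only at hx hy
    by_cases h1 : x.val < n <;> by_cases h2 : y.val < n
    · rw [dif_pos h1] at hx; rw [dif_pos h2] at hy
      rcases Option.map_eq_some_iff.mp hx with ⟨a, ha, ha'⟩
      rcases Option.map_eq_some_iff.mp hy with ⟨b, hb, hb'⟩
      have hab : a = b := Fin.castSucc_injective n (ha'.trans hb'.symm)
      subst hab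
      have := γ.2 _ _ _ ha hb
      exact Fin.ext (by simpa using congrArg Fin.val this)
    · rw [dif_pos h1] at hx; rw [dif_neg h2] at hy
      rcases Option.map_eq_some_iff.mp hx with ⟨a, _, ha'⟩
      have : z.val < n := by rw [← ha']; exact a.isLt
      exact absurd (show y.val < n by rw [Option.some_inj.mp hy]; exact this) h2
    · rw [dif_neg h1] at hx; rw [dif_pos h2] at hy
      rcases Option.map_eq_some_iff.mp hy with ⟨a, _, ha'⟩
      have : z.val < n := by rw [← ha']; exact a.isLt
      exact absurd (show x.val < n by rw [Option.some_inj.mp hx]; exact this) h1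
    · rw [dif_neg h1] at hx; rw [dif_neg h2] at hy
      exact (Option.some_inj.mp hx).trans (Option.some_inj.mp hy).symm⟩

theorem corner_mul_extend1 {n : ℕ} (δ : PartialBij (Fin (n + 1))) (γ : PartialBij (Fin n)) :
    corner (δ * extend1 γ) = corner δ * γ := by
  apply Subtype.ext; funext i
  show (((extend1 γ).1 i.castSucc).bind δ.1).bind _ = (γ.1 i).bind (corner δ).1
  have hi : (i.castSucc : Fin (n + 1)).val < n := i.isLt
  show ((if h : (i.castSucc : Fin (n+1)).val < n then
      (γ.1 ⟨(i.castSucc : Fin (n+1)).val, h⟩).map Fin.castSucc else some i.castSucc).bind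
      δ.1).bind _ = _
  rw [dif_pos hi]
  have : (⟨(i.castSucc : Fin (n+1)).val, hi⟩ : Fin n) = i := Fin.ext rfl
  rw [this]
  cases γ.1 i with
  | none => rfl
  | some a => rfl

theorem corner_extend1_mul {n : ℕ} (γ : PartialBij (Fin n)) (δ : PartialBij (Fin (n + 1))) :
    corner (extend1 γ * δ) = γ * corner δ := by
  apply Subtype.ext; funext i
  show ((δ.1 i.castSucc).bind (extend1 γ).1).bind _ = ((corner δ).1 i).bind γ.1
  show ((δ.1 i.castSucc).bind (extend1 γ).1).bind _ =
    ((δ.1 i.castSucc).bind fun j => if h : j.val < n then some ⟨j.val, h⟩ else none).bind γ.1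
  cases hδ : δ.1 i.castSucc with
  | none => rfl
  | some j =>
    show ((extend1 γ).1 j).bind _ =
      ((if h : j.val < n then some (⟨j.val, h⟩ : Fin n) else none).bind γ.1)
    by_cases hj : j.val < n
    · rw [dif_pos hj]
      show ((if h : j.val < n then (γ.1 ⟨j.val, h⟩).map Fin.castSucc else some j).bind _) = _
      rw [dif_pos hj]
      show ((γ.1 ⟨j.val, hj⟩).map Fin.castSucc).bind
        (fun k : Fin (n+1) => if h : k.val < n then some (⟨k.val, h⟩ : Fin n) else none) =
        γ.1 ⟨j.val, hj⟩
      cases γ.1 ⟨j.val, hj⟩ with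
      | none => rfl
      | some a =>
        show (if h : (a.castSucc : Fin (n+1)).val < n then some (⟨(a.castSucc : Fin (n+1)).val, h⟩ : Fin n) else none) = some a
        rw [dif_pos (show (a.castSucc : Fin (n+1)).val < n from a.isLt)]
        exact congrArg some (Fin.ext rfl)
    · rw [dif_neg hj]
      show ((if h : j.val < n then (γ.1 ⟨j.val, h⟩).map Fin.castSucc else some j).bind _) = none
      rw [dif_neg hj]
      show (if h : j.val < n then some (⟨j.val, h⟩ : Fin n) else none) = none
      rw [dif_neg hj]

theorem mul_single_one' {G : Type*} [Monoid G] (f : MonoidAlgebra ℂ G) (g : G) :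
    f * MonoidAlgebra.single g 1 = MonoidAlgebra.mapDomain (· * g) f := by
  induction f using MonoidAlgebra.induction_on with
  | of m => simp [MonoidAlgebra.of_apply, MonoidAlgebra.single_mul_single]
  | add x y hx hy => rw [add_mul, hx, hy, MonoidAlgebra.mapDomain_add]
  | smul r x hx => rw [smul_mul_assoc, hx]; ext; simp

theorem single_one_mul' {G : Type*} [Monoid G] (f : MonoidAlgebra ℂ G) (g : G) :
    MonoidAlgebra.single g 1 * f = MonoidAlgebra.mapDomain (g * ·) f := by
  induction f using MonoidAlgebra.induction_on with
  | of m => simp [MonoidAlgebra.of_apply, MonoidAlgebra.single_mul_single]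
  | add x y hx hy => rw [mul_add, hx, hy, MonoidAlgebra.mapDomain_add]
  | smul r x hx => rw [mul_smul_comm, hx]; ext; simp

theorem mapDomain_comp' {G H K : Type*} (f : H → K) (g : G → H) (x : MonoidAlgebra ℂ G) :
    MonoidAlgebra.mapDomain (f ∘ g) x =
      MonoidAlgebra.mapDomain f (MonoidAlgebra.mapDomain g x) := by
  ext; simp [Finsupp.mapDomain_comp]

end PartialBij

/-- For `0 ≤ m ≤ n`, the homomorphism `θ_{n+1}` maps the centralizer
`A_m(n+1)` of `Γ_m(n+1)` into the centralizer `A_m(n)` of `Γ_m(n)`. -/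
theorem theta_maps_centralizer (n m : ℕ) (hm : m ≤ n) :
    ∀ a ∈ Subalgebra.centralizer ℂ (PartialBij.Gset m (n + 1)),
      PartialBij.theta n a ∈ Subalgebra.centralizer ℂ (PartialBij.Gset m n) := by
  intro a ha
  rw [Subalgebra.mem_centralizer_iff]
  rintro x ⟨γ, hfix, rfl⟩
  have hγ' : MonoidAlgebra.single (PartialBij.extend1 γ) (1 : ℂ) ∈
      PartialBij.Gset m (n + 1) := by
    refine ⟨PartialBij.extend1 γ, fun i hi => ?_, rfl⟩
    have hin : i.val < n := lt_of_lt_of_le hi hm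
    show (if h : i.val < n then (γ.1 ⟨i.val, h⟩).map Fin.castSucc else some i) = some i
    rw [dif_pos hin, hfix ⟨i.val, hin⟩ hi]
    exact congrArg some (Fin.ext rfl)
  have hcomm := (Subalgebra.mem_centralizer_iff ℂ).mp ha _ hγ'
  -- hcomm : single (extend1 γ) 1 * a = a * single (extend1 γ) 1
  have key1 : PartialBij.theta n a * MonoidAlgebra.single γ 1 =
      PartialBij.theta n (a * MonoidAlgebra.single (PartialBij.extend1 γ) 1) := by
    rw [PartialBij.mul_single_one', PartialBij.mul_single_one', PartialBij.theta,
      PartialBij.theta, ← PartialBij.mapDomain_comp', ← PartialBij.mapDomain_comp']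
    refine congrFun (congrArg MonoidAlgebra.mapDomain ?_) a
    funext δ
    exact (PartialBij.corner_mul_extend1 δ γ).symm
  have key2 : MonoidAlgebra.single γ (1 : ℂ) * PartialBij.theta n a =
      PartialBij.theta n (MonoidAlgebra.single (PartialBij.extend1 γ) 1 * a) := by
    rw [PartialBij.single_one_mul', PartialBij.single_one_mul', PartialBij.theta,
      PartialBij.theta, ← PartialBij.mapDomain_comp', ← PartialBij.mapDomain_comp']
    refine congrFun (congrArg MonoidAlgebra.mapDomain ?_) a
    funext δ
    exact (PartialBij.corner_extend1_mul γ δ).symm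
  rw [key1, key2, hcomm]
end

section
/- In the group algebra C[S(n)], let c_n^{(M)} = sum over all sequences of M pairwise distinct indices i_1,...,i_M in {1,...,n} of the cycle (i_1,...,i_M), for 2 ≤ M ≤ n. Then for partitions M-tuple (M_1,...,M_r) and (L_1,...,L_t) with total size at most n, the product c_n^{M} c_n^{L} equals c_n^{M ∪ L} plus a linear combination of elements c_n^{K} with |K| < |M| + |L|, where c_n^{M} denotes the sum over pairwise distinct index sequences of products of disjoint cycles of lengths M_1,...,M_r. -/
open scoped BigOperators


namespace CEltAux
variable {α : Type*} [DecidableEq α]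

theorem formPerm_map (g : Equiv.Perm α) : ∀ l : List α, (l.map ⇑g).formPerm = g * l.formPerm * g⁻¹
  | [] => by simp
  | [x] => by simp
  | x :: y :: l => by
    have ih := formPerm_map g (y :: l)
    simp only [List.map_cons] at ih ⊢
    rw [List.formPerm_cons_cons, List.formPerm_cons_cons, ih, Equiv.swap_apply_apply]
    group

theorem prod_formPerm_apply_of_not_mem :
    ∀ (L : List (List α)) (x : α), x ∉ L.flatten → (L.map List.formPerm).prod x = x
  | [], _, _ => rfl
  | b :: L, x, hx => by
    simp only [List.flatten_cons, List.mem_append, not_or] at hx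
    rw [List.map_cons, List.prod_cons, Equiv.Perm.mul_apply,
      prod_formPerm_apply_of_not_mem L x hx.2, List.formPerm_apply_of_notMem hx.1]

theorem cycleType_prod_formPerm [Fintype α] :
    ∀ L : List (List α), L.flatten.Nodup →
      ((L.map List.formPerm).prod).cycleType = ↑((L.map List.length).filter (fun b => 2 ≤ b))
  | [], _ => by simp
  | b :: L, h => by
    rw [List.flatten_cons, List.nodup_append] at h
    obtain ⟨hb, hL, hdisj⟩ := h
    have hdis : Equiv.Perm.Disjoint b.formPerm ((L.map List.formPerm).prod) := by
      intro x
      by_contra hc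
      push_neg at hc
      exact hdisj x (List.mem_of_formPerm_apply_ne hc.1)
        x ((not_imp_comm.1 (prod_formPerm_apply_of_not_mem L x)) hc.2) rfl
    rw [List.map_cons, List.prod_cons, hdis.cycleType_mul,
      cycleType_prod_formPerm L hL, List.map_cons, List.filter_cons]
    rcases lt_or_ge b.length 2 with h2 | h2
    · have hb1 : b.formPerm = 1 := by
        match b, h2 with
        | [], _ => exact List.formPerm_nil
        | [x], _ => exact List.formPerm_singleton x
      rw [hb1, Equiv.Perm.cycleType_one, if_neg (by simpa using Nat.not_le.mpr h2), zero_add]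
    · have hcyc := List.isCycle_formPerm hb h2
      rw [hcyc.cycleType, if_pos (by simpa using h2),
        List.support_formPerm_of_nodup b hb (fun x hx => by subst hx; simp at h2),
        List.toFinset_card_of_nodup hb]
      simp

theorem splitAux_append :
    ∀ (ns₁ : List ℕ) (l₁ l₂ : List α), l₁.length = ns₁.sum → ∀ ns₂ : List ℕ,
      (l₁ ++ l₂).splitWrtCompositionAux (ns₁ ++ ns₂) =
        l₁.splitWrtCompositionAux ns₁ ++ l₂.splitWrtCompositionAux ns₂
  | [], l₁, l₂, h, ns₂ => by
    have : l₁ = [] := List.length_eq_zero_iff.mp (by simpa using h)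
    simp [this, List.splitWrtCompositionAux]
  | a :: ns₁, l₁, l₂, h, ns₂ => by
    have ha : a ≤ l₁.length := by rw [h]; simp [List.sum_cons]
    simp only [List.cons_append, List.splitWrtCompositionAux, List.splitAt_eq, List.append_eq]
    rw [List.take_append_of_le_length ha, List.drop_append_of_le_length ha,
      splitAux_append ns₁ (l₁.drop a) l₂ (by rw [List.length_drop, h]; simp) ns₂]

theorem splitAux_map (g : α → α) :
    ∀ (ns : List ℕ) (l : List α),
      (l.map g).splitWrtCompositionAux ns = (l.splitWrtCompositionAux ns).map (List.map g)
  | [], l => rfl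
  | a :: ns, l => by
    simp only [List.splitWrtCompositionAux, List.splitAt_eq, List.map_cons]
    rw [show (l.map g).drop a = (l.drop a).map g by simp, splitAux_map g ns (l.drop a),
      show (l.map g).take a = (l.take a).map g by simp]

end CEltAux

namespace CEltMain
open CEltAux
variable {n : ℕ}

def FP (n : ℕ) {N : ℕ} (c : Composition N) (w : Fin N ↪ Fin n) : Equiv.Perm (Fin n) :=
  (((List.ofFn ⇑w).splitWrtComposition c).map List.formPerm).prod

theorem cElt_def (n : ℕ) {N : ℕ} (c : Composition N) :
    cElt n c = ∑ w : Fin N ↪ Fin n, MonoidAlgebra.single (FP n c w) 1 := rfl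

theorem flatten_split {N : ℕ} (c : Composition N) (w : Fin N ↪ Fin n) :
    ((List.ofFn ⇑w).splitWrtComposition c).flatten = List.ofFn ⇑w :=
  List.flatten_splitWrtCompositionAux (by rw [c.blocks_sum, List.length_ofFn])

theorem nodup_ofFn_emb {N : ℕ} (w : Fin N ↪ Fin n) : (List.ofFn ⇑w).Nodup :=
  List.nodup_ofFn.mpr w.injective

theorem FP_cycleType {N : ℕ} (c : Composition N) (w : Fin N ↪ Fin n) :
    (FP n c w).cycleType = ↑(c.blocks.filter (fun b => 2 ≤ b)) := by
  rw [FP, cycleType_prod_formPerm _ (by rw [flatten_split]; exact nodup_ofFn_emb w)]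
  congr 2
  exact List.map_length_splitWrtCompositionAux (by rw [c.blocks_sum, List.length_ofFn])

theorem FP_support {N : ℕ} (c : Composition N) (w : Fin N ↪ Fin n) :
    (FP n c w).support ⊆ Finset.univ.map w := by
  intro x hx
  have hne := Equiv.Perm.mem_support.mp hx
  have h1 := prod_formPerm_apply_of_not_mem ((List.ofFn ⇑w).splitWrtComposition c) x
  rw [flatten_split] at h1
  have hmem : x ∈ List.ofFn ⇑w := not_imp_comm.1 h1 hne
  obtain ⟨i, hi⟩ := List.mem_ofFn.mp hmem
  exact Finset.mem_map.mpr ⟨i, Finset.mem_univ _, hi⟩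

theorem FP_conj {N : ℕ} (c : Composition N) (w : Fin N ↪ Fin n) (g : Equiv.Perm (Fin n)) :
    FP n c (w.trans g.toEmbedding) = g * FP n c w * g⁻¹ := by
  have h1 : List.ofFn ⇑(w.trans g.toEmbedding) = (List.ofFn ⇑w).map ⇑g := by
    rw [List.map_ofFn]; rfl
  rw [FP, FP, h1]
  show ((((List.ofFn ⇑w).map ⇑g).splitWrtCompositionAux c.blocks).map List.formPerm).prod = _
  rw [splitAux_map, List.map_map]
  have h2 : (List.formPerm ∘ List.map ⇑g) =
      (fun p => g * p * g⁻¹) ∘ List.formPerm := by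
    funext l; exact formPerm_map g l
  rw [h2, ← List.map_map]
  have h3 : (fun p : Equiv.Perm (Fin n) => g * p * g⁻¹) = ⇑(MulAut.conj g) := by
    funext p; simp [MulAut.conj_apply]
  rw [h3, ← map_list_prod (MulAut.conj g)]
  rfl

end CEltMain
namespace CEltMain
open CEltAux
variable {n : ℕ}

theorem trans_toEmbedding_trans_inv {N : ℕ} (w : Fin N ↪ Fin n) (g : Equiv.Perm (Fin n)) :
    (w.trans g.toEmbedding).trans g⁻¹.toEmbedding = w := by
  ext i; simp

theorem count_conj {d : ℕ} (c : Composition d) (g σ : Equiv.Perm (Fin n)) :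
    (Finset.univ.filter fun w : Fin d ↪ Fin n => FP n c w = g * σ * g⁻¹).card =
      (Finset.univ.filter fun w : Fin d ↪ Fin n => FP n c w = σ).card := by
  classical
  refine Finset.card_bij' (fun w _ => w.trans g⁻¹.toEmbedding)
    (fun w _ => w.trans g.toEmbedding) ?_ ?_ ?_ ?_
  · intro w hw
    rw [Finset.mem_filter] at hw ⊢
    refine ⟨Finset.mem_univ _, ?_⟩
    rw [FP_conj, hw.2]
    group
  · intro w hw
    rw [Finset.mem_filter] at hw ⊢
    refine ⟨Finset.mem_univ _, ?_⟩
    rw [FP_conj, hw.2]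
  · intro w _
    ext i; simp
  · intro w _; ext i; simp

theorem conj_of_cycleType_eq {σ τ : Equiv.Perm (Fin n)} (h : σ.cycleType = τ.cycleType) :
    ∃ g : Equiv.Perm (Fin n), τ = g * σ * g⁻¹ := by
  obtain ⟨g, hg⟩ := isConj_iff.mp (Equiv.Perm.isConj_iff_cycleType_eq.mpr h)
  exact ⟨g, hg.symm⟩

/-- Class sum. -/
noncomputable def CS (n : ℕ) (lam : Multiset ℕ) : MonoidAlgebra ℂ (Equiv.Perm (Fin n)) :=
  ∑ σ ∈ Finset.univ.filter (fun σ : Equiv.Perm (Fin n) => σ.cycleType = lam),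
    MonoidAlgebra.single σ 1

theorem CS_mem_span {m : ℕ} (hmn : m ≤ n) (lam : Multiset ℕ) (σ₀ : Equiv.Perm (Fin n))
    (h₀ : σ₀.cycleType = lam) (hlt : lam.sum < m) :
    CS n lam ∈ Submodule.span ℂ
      {a : MonoidAlgebra ℂ (Equiv.Perm (Fin n)) |
        ∃ N' : ℕ, N' < m ∧ ∃ c : Composition N', a = cElt n c} := by
  classical
  have h2le : ∀ b ∈ lam, 2 ≤ b := fun b hb =>
    Equiv.Perm.two_le_of_mem_cycleType (h₀ ▸ hb)
  set c : Composition lam.sum :=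
    ⟨lam.toList, fun {i} hi => lt_of_lt_of_le two_pos (h2le i (Multiset.mem_toList.mp hi)),
      by simp⟩ with hcdef
  have hct : ∀ w : Fin lam.sum ↪ Fin n, (FP n c w).cycleType = lam := by
    intro w
    rw [FP_cycleType]
    have hfil : c.blocks.filter (fun b => 2 ≤ b) = c.blocks :=
      List.filter_eq_self.mpr fun b hb => by
        simpa using h2le b (Multiset.mem_toList.mp hb)
    rw [hfil]
    show ((lam.toList : List ℕ) : Multiset ℕ) = lam
    simp
  set t := (Finset.univ.filter fun w : Fin lam.sum ↪ Fin n => FP n c w = σ₀).card with ht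
  have hconst : ∀ σ : Equiv.Perm (Fin n), σ.cycleType = lam →
      (Finset.univ.filter fun w : Fin lam.sum ↪ Fin n => FP n c w = σ).card = t := by
    intro σ hσ
    obtain ⟨g, hg⟩ := conj_of_cycleType_eq (h₀.trans hσ.symm)
    rw [hg, ht, count_conj]
  have hB : cElt n c = (t : ℂ) • CS n lam := by
    rw [cElt_def, CS, Finset.smul_sum,
      ← Finset.sum_fiberwise_of_maps_to
        (g := fun w : Fin lam.sum ↪ Fin n => FP n c w)
        (t := Finset.univ.filter fun σ : Equiv.Perm (Fin n) => σ.cycleType = lam)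
        (fun w _ => Finset.mem_filter.mpr ⟨Finset.mem_univ _, hct w⟩)
        (fun w => MonoidAlgebra.single (FP n c w) (1 : ℂ))]
    refine Finset.sum_congr rfl fun σ hσ => ?_
    have hval : ∀ w ∈ Finset.univ.filter
        (fun w : Fin lam.sum ↪ Fin n => FP n c w = σ),
        MonoidAlgebra.single (FP n c w) (1 : ℂ) = MonoidAlgebra.single σ 1 := by
      intro w hw
      rw [(Finset.mem_filter.mp hw).2]
    rw [Finset.sum_congr rfl hval, Finset.sum_const,
      hconst σ (Finset.mem_filter.mp hσ).2, Nat.cast_smul_eq_nsmul]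
  have htne : t ≠ 0 := by
    have hle : lam.sum ≤ n := le_trans hlt.le hmn
    have hcard := Finset.card_eq_sum_card_fiberwise
      (f := fun w : Fin lam.sum ↪ Fin n => FP n c w)
      (s := Finset.univ)
      (t := Finset.univ.filter fun σ : Equiv.Perm (Fin n) => σ.cycleType = lam)
      (fun w _ => Finset.mem_filter.mpr ⟨Finset.mem_univ _, hct w⟩)
    intro ht0
    have hzero : ∀ σ ∈ Finset.univ.filter
        (fun σ : Equiv.Perm (Fin n) => σ.cycleType = lam),
        (Finset.univ.filter fun w : Fin lam.sum ↪ Fin n => FP n c w = σ).card = 0 := by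
      intro σ hσ
      rw [hconst σ (Finset.mem_filter.mp hσ).2, ht0]
    rw [Finset.sum_congr rfl hzero, Finset.sum_const_zero] at hcard
    have : Nonempty (Fin lam.sum ↪ Fin n) := ⟨Fin.castLEEmb hle⟩
    rw [Finset.card_univ] at hcard
    exact Fintype.card_ne_zero (α := Fin lam.sum ↪ Fin n) hcard
  have hCS : CS n lam = (t : ℂ)⁻¹ • cElt n c := by
    rw [hB, smul_smul, inv_mul_cancel₀ (by exact_mod_cast htne), one_smul]
  rw [hCS]
  exact Submodule.smul_mem _ _ (Submodule.subset_span ⟨lam.sum, hlt, c, rfl⟩)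

theorem central {m : ℕ} (hmn : m ≤ n) (f : Equiv.Perm (Fin n) → ℂ)
    (hconj : ∀ g σ : Equiv.Perm (Fin n), f (g * σ * g⁻¹) = f σ)
    (hsupp : ∀ σ : Equiv.Perm (Fin n), f σ ≠ 0 → σ.support.card < m) :
    ∑ σ : Equiv.Perm (Fin n), f σ • MonoidAlgebra.single σ (1 : ℂ) ∈
      Submodule.span ℂ
        {a : MonoidAlgebra ℂ (Equiv.Perm (Fin n)) |
          ∃ N' : ℕ, N' < m ∧ ∃ c : Composition N', a = cElt n c} := by
  classical
  rw [← Finset.sum_fiberwise_of_maps_to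
      (g := Equiv.Perm.cycleType)
      (t := Finset.univ.image Equiv.Perm.cycleType)
      (fun σ _ => Finset.mem_image_of_mem _ (Finset.mem_univ σ))
      (fun σ => f σ • MonoidAlgebra.single σ (1 : ℂ))]
  apply Submodule.sum_mem
  intro lam hlam
  obtain ⟨σ₀, -, h₀⟩ := Finset.mem_image.mp hlam
  have hsum : ∑ σ ∈ Finset.univ.filter
      (fun σ : Equiv.Perm (Fin n) => σ.cycleType = lam),
      f σ • MonoidAlgebra.single σ (1 : ℂ) = f σ₀ • CS n lam := by
    rw [CS, Finset.smul_sum]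
    refine Finset.sum_congr rfl fun σ hσ => ?_
    obtain ⟨g, hg⟩ := conj_of_cycleType_eq (h₀.trans (Finset.mem_filter.mp hσ).2.symm)
    rw [hg, hconj]
  rw [hsum]
  by_cases hf : f σ₀ = 0
  · rw [hf, zero_smul]; exact Submodule.zero_mem _
  · refine Submodule.smul_mem _ _ (CS_mem_span hmn lam σ₀ h₀ ?_)
    calc lam.sum = σ₀.support.card := by rw [← h₀, Equiv.Perm.sum_cycleType]
    _ < m := hsupp σ₀ hf

end CEltMain
namespace CEltMain
open CEltAux
variable {n : ℕ}

theorem FP_app {N K : ℕ} (M : Composition N) (L : Composition K) (u : Fin (N + K) ↪ Fin n) :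
    FP n (M.app L) u =
      FP n M ((Fin.castAddEmb K).trans u) * FP n L ((Fin.natAddEmb N).trans u) := by
  have h1 : List.ofFn ⇑u =
      List.ofFn ⇑((Fin.castAddEmb K).trans u) ++ List.ofFn ⇑((Fin.natAddEmb N).trans u) := by
    rw [List.ofFn_add (f := ⇑u)]
    congr 1 <;> · apply congrArg; funext i; simp
  rw [FP, FP, FP]
  show ((((List.ofFn ⇑u)).splitWrtCompositionAux (M.app L).blocks).map List.formPerm).prod = _
  have h2 : (M.app L).blocks = M.blocks ++ L.blocks := rfl
  rw [h1, h2, splitAux_append M.blocks _ _ (by rw [List.length_ofFn, M.blocks_sum]) L.blocks,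
    List.map_append, List.prod_append]
  rfl

theorem main_bij {N K : ℕ} (M : Composition N) (L : Composition K) :
    ∑ p ∈ Finset.univ.filter (fun p : (Fin N ↪ Fin n) × (Fin K ↪ Fin n) =>
        Disjoint (Finset.univ.map p.1) (Finset.univ.map p.2)),
      MonoidAlgebra.single (FP n M p.1 * FP n L p.2) (1 : ℂ) = cElt n (M.app L) := by
  classical
  rw [cElt_def]
  refine (Finset.sum_bij
    (i := fun (u : Fin (N + K) ↪ Fin n) _ =>
      ((Fin.castAddEmb K).trans u, (Fin.natAddEmb N).trans u)) ?_ ?_ ?_ ?_).symm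
  · intro u _
    rw [Finset.mem_filter]
    refine ⟨Finset.mem_univ _, Finset.disjoint_left.mpr ?_⟩
    rintro x hx1 hx2
    obtain ⟨i, -, hi⟩ := Finset.mem_map.mp hx1
    obtain ⟨j, -, hj⟩ := Finset.mem_map.mp hx2
    have hij : Fin.castAdd K i = Fin.natAdd N j := by
      apply u.injective
      simpa using hi.trans hj.symm
    have : (i : ℕ) = N + j := by
      have := congrArg Fin.val hij
      simpa using this
    omega
  · intro u _ u' _ h
    have h1 := congrArg Prod.fst h
    have h2 := congrArg Prod.snd h
    simp only at h1 h2
    ext x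
    refine Fin.addCases (fun i => ?_) (fun j => ?_) x
    · exact congrArg Fin.val (DFunLike.congr_fun h1 i)
    · exact congrArg Fin.val (DFunLike.congr_fun h2 j)
  · rintro ⟨w, v⟩ hp
    have hdisj := (Finset.mem_filter.mp hp).2
    have hinj : Function.Injective (Fin.append ⇑w ⇑v) := by
      intro a b
      refine Fin.addCases (fun i => ?_) (fun j => ?_) a <;>
        refine Fin.addCases (fun i' => ?_) (fun j' => ?_) b <;> intro hab
      · rw [Fin.append_left, Fin.append_left] at hab
        rw [w.injective hab]
      · rw [Fin.append_left, Fin.append_right] at hab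
        have hm1 : w i ∈ Finset.univ.map w := Finset.mem_map_of_mem w (Finset.mem_univ i)
        have hm2 : w i ∈ Finset.univ.map v := by
          rw [hab]; exact Finset.mem_map_of_mem v (Finset.mem_univ j')
        exact absurd hm2 (Finset.disjoint_left.mp hdisj hm1)
      · rw [Fin.append_right, Fin.append_left] at hab
        have hm1 : w i' ∈ Finset.univ.map w := Finset.mem_map_of_mem w (Finset.mem_univ i')
        have hm2 : w i' ∈ Finset.univ.map v := by
          rw [← hab]; exact Finset.mem_map_of_mem v (Finset.mem_univ j)
        exact absurd hm2 (Finset.disjoint_left.mp hdisj hm1)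
      · rw [Fin.append_right, Fin.append_right] at hab
        rw [v.injective hab]
    refine ⟨⟨Fin.append ⇑w ⇑v, hinj⟩, Finset.mem_univ _, ?_⟩
    refine Prod.ext ?_ ?_ <;> ext i
    · exact congrArg Fin.val (Fin.append_left (⇑w) (⇑v) i)
    · exact congrArg Fin.val (Fin.append_right (⇑w) (⇑v) i)
  · intro u _
    rw [FP_app]

end CEltMain

/-- `c_n^{M} · c_n^{L} = c_n^{M ∪ L} +` a linear combination of elements
`c_n^{K}` with `|K| < |M| + |L|`. -/
theorem cElt_mul (n : ℕ) {N K : ℕ} (M : Composition N) (L : Composition K)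
    (h : N + K ≤ n) :
    cElt n M * cElt n L - cElt n (M.app L) ∈
      Submodule.span ℂ
        {a : MonoidAlgebra ℂ (Equiv.Perm (Fin n)) |
          ∃ N' : ℕ, N' < N + K ∧ ∃ c : Composition N', a = cElt n c} := by
  classical
  have hprod : cElt n M * cElt n L =
      ∑ p : (Fin N ↪ Fin n) × (Fin K ↪ Fin n),
        MonoidAlgebra.single (CEltMain.FP n M p.1 * CEltMain.FP n L p.2) (1 : ℂ) := by
    rw [CEltMain.cElt_def, CEltMain.cElt_def, Finset.sum_mul_sum, Fintype.sum_prod_type]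
    refine Finset.sum_congr rfl fun w _ => Finset.sum_congr rfl fun v _ => ?_
    rw [MonoidAlgebra.single_mul_single, one_mul]
  have hsplit := Finset.sum_filter_add_sum_filter_not Finset.univ
    (fun p : (Fin N ↪ Fin n) × (Fin K ↪ Fin n) =>
      Disjoint (Finset.univ.map p.1) (Finset.univ.map p.2))
    (fun p => MonoidAlgebra.single (CEltMain.FP n M p.1 * CEltMain.FP n L p.2) (1 : ℂ))
  have hmain : cElt n M * cElt n L - cElt n (M.app L) =
      ∑ p ∈ Finset.univ.filter (fun p : (Fin N ↪ Fin n) × (Fin K ↪ Fin n) =>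
          ¬ Disjoint (Finset.univ.map p.1) (Finset.univ.map p.2)),
        MonoidAlgebra.single (CEltMain.FP n M p.1 * CEltMain.FP n L p.2) (1 : ℂ) := by
    rw [hprod, ← hsplit, CEltMain.main_bij M L, add_sub_cancel_left]
  set T := Finset.univ.filter (fun p : (Fin N ↪ Fin n) × (Fin K ↪ Fin n) =>
      ¬ Disjoint (Finset.univ.map p.1) (Finset.univ.map p.2)) with hT
  set G : (Fin N ↪ Fin n) × (Fin K ↪ Fin n) → Equiv.Perm (Fin n) :=
      fun p => CEltMain.FP n M p.1 * CEltMain.FP n L p.2 with hG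
  set f : Equiv.Perm (Fin n) → ℂ :=
      fun σ => ((T.filter (fun p => G p = σ)).card : ℂ) with hf
  have hfib : (∑ p ∈ T, MonoidAlgebra.single (G p) (1 : ℂ)) =
      ∑ σ : Equiv.Perm (Fin n), f σ • MonoidAlgebra.single σ (1 : ℂ) := by
    rw [← Finset.sum_fiberwise_of_maps_to (g := G) (t := Finset.univ)
      (fun p _ => Finset.mem_univ (G p)) (fun p => MonoidAlgebra.single (G p) (1 : ℂ))]
    refine Finset.sum_congr rfl fun σ _ => ?_
    have hval : ∀ p ∈ T.filter (fun p => G p = σ),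
        MonoidAlgebra.single (G p) (1 : ℂ) = MonoidAlgebra.single σ 1 := fun p hp => by
      rw [(Finset.mem_filter.mp hp).2]
    rw [Finset.sum_congr rfl hval, Finset.sum_const, hf, ← Nat.cast_smul_eq_nsmul ℂ]
  rw [hmain, hfib]
  apply CEltMain.central h f
  · intro g σ
    show ((T.filter (fun p => G p = g * σ * g⁻¹)).card : ℂ) = ((T.filter (fun p => G p = σ)).card : ℂ)
    congr 1
    refine Finset.card_bij' (fun p _ => (p.1.trans g⁻¹.toEmbedding, p.2.trans g⁻¹.toEmbedding))
      (fun p _ => (p.1.trans g.toEmbedding, p.2.trans g.toEmbedding)) ?_ ?_ ?_ ?_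
    · intro p hp
      simp only [Finset.mem_filter] at hp ⊢
      obtain ⟨hpT, hpG⟩ := hp
      constructor
      · simp only [hT, Finset.mem_filter] at hpT ⊢
        refine ⟨Finset.mem_univ _, ?_⟩
        intro hd
        apply hpT.2
        have e1 : Finset.univ.map (p.1.trans g⁻¹.toEmbedding) =
            (Finset.univ.map p.1).map g⁻¹.toEmbedding := by rw [Finset.map_map]
        have e2 : Finset.univ.map (p.2.trans g⁻¹.toEmbedding) =
            (Finset.univ.map p.2).map g⁻¹.toEmbedding := by rw [Finset.map_map]
        rw [e1, e2, Finset.disjoint_map] at hd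
        exact hd
      · show CEltMain.FP n M (p.1.trans g⁻¹.toEmbedding) *
            CEltMain.FP n L (p.2.trans g⁻¹.toEmbedding) = σ
        rw [CEltMain.FP_conj, CEltMain.FP_conj]
        have hpG' : CEltMain.FP n M p.1 * CEltMain.FP n L p.2 = g * σ * g⁻¹ := hpG
        rw [inv_inv,
          show ((g⁻¹ * CEltMain.FP n M p.1 * g) * (g⁻¹ * CEltMain.FP n L p.2 * g)) =
            g⁻¹ * (CEltMain.FP n M p.1 * CEltMain.FP n L p.2) * g by group, hpG']
        group
    · intro p hp
      simp only [Finset.mem_filter] at hp ⊢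
      obtain ⟨hpT, hpG⟩ := hp
      constructor
      · simp only [hT, Finset.mem_filter] at hpT ⊢
        refine ⟨Finset.mem_univ _, ?_⟩
        intro hd
        apply hpT.2
        have e1 : Finset.univ.map (p.1.trans g.toEmbedding) =
            (Finset.univ.map p.1).map g.toEmbedding := by rw [Finset.map_map]
        have e2 : Finset.univ.map (p.2.trans g.toEmbedding) =
            (Finset.univ.map p.2).map g.toEmbedding := by rw [Finset.map_map]
        rw [e1, e2, Finset.disjoint_map] at hd
        exact hd
      · show CEltMain.FP n M (p.1.trans g.toEmbedding) *
            CEltMain.FP n L (p.2.trans g.toEmbedding) = g * σ * g⁻¹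
        rw [CEltMain.FP_conj, CEltMain.FP_conj]
        have hpG' : CEltMain.FP n M p.1 * CEltMain.FP n L p.2 = σ := hpG
        rw [show ((g * CEltMain.FP n M p.1 * g⁻¹) * (g * CEltMain.FP n L p.2 * g⁻¹)) =
          g * (CEltMain.FP n M p.1 * CEltMain.FP n L p.2) * g⁻¹ by group, hpG']
    · intro p _
      refine Prod.ext ?_ ?_ <;> ext i <;> simp
    · intro p _
      refine Prod.ext ?_ ?_ <;> ext i <;> simp
  · intro σ hσ
    have hcard : (T.filter (fun p => G p = σ)).card ≠ 0 := by
      intro h0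
      apply hσ
      show ((T.filter (fun p => G p = σ)).card : ℂ) = 0
      rw [h0, Nat.cast_zero]
    obtain ⟨p, hp⟩ := Finset.card_pos.mp (Nat.pos_of_ne_zero hcard)
    rw [Finset.mem_filter] at hp
    obtain ⟨hpT, hpG⟩ := hp
    rw [hT, Finset.mem_filter] at hpT
    obtain ⟨x, hx1, hx2⟩ := Finset.not_disjoint_iff.mp hpT.2
    have hsub : σ.support ⊆ Finset.univ.map p.1 ∪ Finset.univ.map p.2 := by
      rw [← hpG]
      intro y hy
      have hy2 := Equiv.Perm.support_mul_le (CEltMain.FP n M p.1) (CEltMain.FP n L p.2) hy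
      rcases Finset.mem_union.mp hy2 with h1 | h1
      · exact Finset.mem_union_left _ (CEltMain.FP_support M p.1 h1)
      · exact Finset.mem_union_right _ (CEltMain.FP_support L p.2 h1)
    have hcu : (Finset.univ.map p.1 ∪ Finset.univ.map p.2).card < N + K := by
      have h1 := Finset.card_union_add_card_inter (Finset.univ.map p.1) (Finset.univ.map p.2)
      have h2 : 0 < (Finset.univ.map p.1 ∩ Finset.univ.map p.2).card :=
        Finset.card_pos.mpr ⟨x, Finset.mem_inter.mpr ⟨hx1, hx2⟩⟩
      have h3 : (Finset.univ.map p.1).card = N := by simp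
      have h4 : (Finset.univ.map p.2).card = K := by simp
      omega
    exact lt_of_le_of_lt (Finset.card_le_card hsub) hcu
end
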